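/- arXiv:1710.05218 — 8 statements merged into one kernel-verified Lean document; each statement's English description precedes it below -/
import Mathlib

section
/- Let T ∈ ℝ^(r×m) be a matrix and g : Fin r → Fin m. The system of inequalities T_{i,g(i)} - x_{g(i)} ≥ T_{i,k} - x_k for all i ∈ Fin r and all k ∈ Fin m with k ≠ g(i) is feasible in x ∈ ℝ^m if and only if the reduced system consisting only of those inequalities with k in the range of g is feasible. -/
theorem stmt_0 {r m : ℕ} (T : Matrix (Fin r) (Fin m) ℝ) (g : Fin r → Fin m) :
    (∃ x : Fin m → ℝ, ∀ i k, k ≠ g i → T i (g i) - x (g i) ≥ T i k - x k) ↔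
    (∃ x : Fin m → ℝ, ∀ i k, k ≠ g i → k ∈ Set.range g →
      T i (g i) - x (g i) ≥ T i k - x k) := by
  constructor
  · rintro ⟨x, hx⟩
    exact ⟨x, fun i k hk _ => hx i k hk⟩
  · rintro ⟨x, hx⟩
    obtain ⟨C, hC⟩ := Finite.exists_le
      (fun p : Fin r × Fin m => T p.1 p.2 - T p.1 (g p.1) + x (g p.1))
    classical
    refine ⟨fun k => if k ∈ Set.range g then x k else C, fun i k hk => ?_⟩
    have hgi : g i ∈ Set.range g := ⟨i, rfl⟩
    by_cases hkr : k ∈ Set.range g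
    · simp only [hgi, hkr, if_pos]
      exact hx i k hk hkr
    · simp only [hgi, if_pos, hkr, if_neg, not_false_iff]
      have := hC (i, k)
      simp only at this
      linarith
end

section
/- Let T¹, T² ∈ ℝ^(r×m). Then the sets of IC outcome functions of T¹ and T² coincide if and only if for every pair of index sets I ⊆ Fin r and J ⊆ Fin m with |I| = |J|, the set of bijections τ : I → J attaining the maximum of Σ_{i∈I} T_{i,τ(i)} is the same for T¹ and T² (i.e., the minors T¹_{I,J} and T²_{I,J} have the same set of permutations achieving their max-plus tropical determinant). -/
def IsIC {r m : ℕ} (T : Matrix (Fin r) (Fin m) ℝ) (h : Fin r → Fin m) : Prop :=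
  ∃ x : Fin m → ℝ, ∀ i k, T i (h i) - x (h i) ≥ T i k - x k

open Finset

namespace ICAux

set_option linter.unusedSectionVars false

variable {α : Type*} [DecidableEq α]

/-- Weight of a walk, given as a list of vertices. -/
def walkW (d : α → α → ℝ) : List α → ℝ
  | [] => 0
  | [_] => 0
  | a :: b :: t => d a b + walkW d (b :: t)

@[simp] lemma walkW_nil (d : α → α → ℝ) : walkW d [] = 0 := rfl
@[simp] lemma walkW_single (d : α → α → ℝ) (a : α) : walkW d [a] = 0 := rfl
@[simp] lemma walkW_cons_cons (d : α → α → ℝ) (a b : α) (t : List α) :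
    walkW d (a :: b :: t) = d a b + walkW d (b :: t) := rfl

lemma walkW_split (d : α → α → ℝ) (v : α) (ys : List α) :
    ∀ xs : List α, walkW d (xs ++ v :: ys) = walkW d (xs ++ [v]) + walkW d (v :: ys)
  | [] => by simp
  | [a] => by simp
  | a :: b :: xs => by
    have := walkW_split d v ys (b :: xs)
    simp only [List.cons_append, walkW_cons_cons] at this ⊢
    rw [this]; ring

lemma walkW_congr {d d' : α → α → ℝ} :
    ∀ {l : List α}, List.Chain' (fun a b => d a b = d' a b) l → walkW d l = walkW d' l
  | [], _ => rfl
  | [_], _ => rfl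
  | _ :: _ :: _, h => by
    unfold List.Chain' at h
    rw [List.isChain_cons_cons] at h
    simp only [walkW_cons_cons, h.1, walkW_congr h.2]

lemma walkW_concat_eq_sum {d : α → α → ℝ} {f : α → α} :
    ∀ (l : List α) (w : α), List.Chain' (fun a b => f a = b) (l ++ [w]) →
      walkW d (l ++ [w]) = (l.map (fun a => d a (f a))).sum
  | [], _, _ => by simp
  | [a], w, h => by
    unfold List.Chain' at h
    rw [List.singleton_append, List.isChain_cons_cons] at h
    simp [← h.1]
  | a :: b :: t, w, h => by
    simp only [List.cons_append] at h ⊢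
    unfold List.Chain' at h
    rw [List.isChain_cons_cons] at h
    have := walkW_concat_eq_sum (d := d) (b :: t) w h.2
    simp only [List.cons_append] at this
    simp only [walkW_cons_cons, List.map_cons, List.sum_cons]
    rw [this, h.1]
    simp

lemma walkW_ge {d : α → α → ℝ} {B : ℝ} (hB0 : 0 ≤ B) (hB : ∀ a b, -B ≤ d a b) :
    ∀ l : List α, -((l.length : ℝ) * B) ≤ walkW d l
  | [] => by simp
  | [a] => by simpa using hB0
  | a :: b :: t => by
    have h1 := walkW_ge hB0 hB (b :: t)
    have h2 := hB a b
    simp only [walkW_cons_cons, List.length_cons] at h1 ⊢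
    push_cast at h1 ⊢
    nlinarith

lemma walkW_fake {d : α → α → ℝ} {B M : ℝ} (hB0 : 0 ≤ B) (hB : ∀ a b, -B ≤ d a b)
    {u : α} (hu : ∀ b, M ≤ d u b) :
    ∀ l : List α, u ∈ l.dropLast → M - (l.length : ℝ) * B ≤ walkW d l
  | [], h => by simp at h
  | [a], h => by simp at h
  | a :: b :: t, h => by
    rw [List.dropLast_cons₂, List.mem_cons] at h
    have h1 := walkW_ge hB0 hB (b :: t)
    simp only [walkW_cons_cons, List.length_cons]
    simp only [List.length_cons] at h1
    push_cast at h1 ⊢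
    rcases h with h | h
    · subst h
      have := hu b
      nlinarith
    · have h3 := walkW_fake hB0 hB hu (b :: t) h
      have h2 := hB a b
      simp only [List.length_cons] at h3
      push_cast at h3
      nlinarith

lemma exists_dup_decomp :
    ∀ {l : List α}, ¬ l.Nodup → ∃ (p : List α) (v : α) (q s : List α),
      l = p ++ v :: q ++ v :: s ∧ (v :: q).Nodup
  | [], h => absurd List.nodup_nil h
  | a :: t, h => by
    by_cases ht : t.Nodup
    · have ha : a ∈ t := by
        by_contra ha
        exact h (List.nodup_cons.mpr ⟨ha, ht⟩)
      obtain ⟨q, s, rfl⟩ := List.append_of_mem ha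
      refine ⟨[], a, q, s, by simp, List.nodup_cons.mpr ⟨?_, ht.sublist (q.sublist_append_left _)⟩⟩
      have := (List.nodup_append'.mp ht).2.2
      intro haq
      exact this haq (List.mem_cons_self (a := a) (l := s))
    · obtain ⟨p, v, q, s, rfl, hnd⟩ := exists_dup_decomp ht
      exact ⟨a :: p, v, q, s, by simp, hnd⟩

lemma shorten (d : α → α → ℝ)
    (Hcyc : ∀ (v : α) (q : List α), (v :: q).Nodup → 0 ≤ walkW d ((v :: q) ++ [v])) (a : α) :
    ∀ (n : ℕ) (t : List α), t.length ≤ n →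
      ∃ t' : List α, (a :: t').Nodup ∧ walkW d (a :: t') ≤ walkW d (a :: t) := by
  intro n
  induction n with
  | zero =>
    intro t ht
    rw [Nat.le_zero, List.length_eq_zero_iff] at ht
    subst ht
    exact ⟨[], List.nodup_singleton a, le_rfl⟩
  | succ n ih =>
    intro t ht
    by_cases hnd : (a :: t).Nodup
    · exact ⟨t, hnd, le_rfl⟩
    · obtain ⟨p, v, q, s, hl, hvq⟩ := exists_dup_decomp hnd
      have key : walkW d (p ++ v :: s) ≤ walkW d (a :: t) := by
        have e1 : walkW d (a :: t) =
            walkW d (p ++ [v]) + walkW d (v :: (q ++ v :: s)) := by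
          rw [hl]
          have : p ++ v :: q ++ v :: s = p ++ v :: (q ++ v :: s) := by simp
          rw [this, walkW_split]
        have e2 : walkW d (v :: (q ++ v :: s)) =
            walkW d ((v :: q) ++ [v]) + walkW d (v :: s) := by
          have : v :: (q ++ v :: s) = (v :: q) ++ v :: s := by simp
          rw [this, walkW_split]
        have e3 : walkW d (p ++ v :: s) = walkW d (p ++ [v]) + walkW d (v :: s) :=
          walkW_split d v s p
        have := Hcyc v q hvq
        rw [e1, e2, e3]
        linarith
      rcases p with _ | ⟨a', p'⟩
      · rw [List.nil_append, List.cons_append, List.cons.injEq] at hl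
        obtain ⟨rfl, rfl⟩ := hl
        have hlen : s.length ≤ n := by
          have := ht
          simp only [List.length_append, List.length_cons] at this
          omega
        obtain ⟨t', hnd', hle'⟩ := ih s hlen
        refine ⟨t', hnd', hle'.trans (le_trans (le_of_eq ?_) key)⟩
        simp
      · simp only [List.cons_append, List.append_assoc, List.cons.injEq] at hl
        obtain ⟨rfl, rfl⟩ := hl
        have hlen : (p' ++ v :: s).length ≤ n := by
          simp only [List.length_append, List.length_cons] at ht ⊢
          omega
        obtain ⟨t', hnd', hle'⟩ := ih (p' ++ v :: s) hlen
        refine ⟨t', hnd', hle'.trans (le_trans (le_of_eq ?_) key)⟩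
        simp

lemma potential [Fintype α] [Nonempty α] (d : α → α → ℝ)
    (Hcyc : ∀ (v : α) (q : List α), (v :: q).Nodup → 0 ≤ walkW d ((v :: q) ++ [v])) :
    ∃ x : α → ℝ, ∀ a b, x b ≤ d b a + x a := by
  classical
  set N := Fintype.card α with hN
  have hN1 : 1 ≤ N := Fintype.card_pos
  set L : Finset (List α) :=
    (Finset.range N).biUnion (fun k => (Finset.univ : Finset (Fin k → α)).image List.ofFn) with hL
  have hmemL : ∀ t : List α, t.length < N → t ∈ L := by
    intro t ht
    rw [hL, Finset.mem_biUnion]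
    exact ⟨t.length, Finset.mem_range.mpr ht, Finset.mem_image.mpr ⟨t.get, Finset.mem_univ _,
      List.ofFn_get t⟩⟩
  have hne : L.Nonempty := ⟨[], hmemL [] (by simp only [List.length_nil]; omega)⟩
  refine ⟨fun b => L.inf' hne (fun t => walkW d (b :: t)), fun a b => ?_⟩
  obtain ⟨t₀, ht₀, he⟩ := Finset.exists_mem_eq_inf' hne (fun t => walkW d (a :: t))
  simp only []
  rw [he]
  obtain ⟨t', hnd', hle'⟩ := shorten d Hcyc b (a :: t₀).length (a :: t₀) le_rfl
  have ht' : t' ∈ L := by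
    apply hmemL
    have := hnd'.length_le_card
    rw [← hN] at this
    simpa using this
  calc L.inf' hne (fun t => walkW d (b :: t)) ≤ walkW d (b :: t') := Finset.inf'_le _ ht'
    _ ≤ walkW d (b :: a :: t₀) := hle'
    _ = d b a + walkW d (a :: t₀) := by simp

lemma chain_formPerm (v : α) (q : List α) (h : (v :: q).Nodup) :
    List.Chain' (fun a b => a ∈ (v :: q) ∧ (v :: q).formPerm a = b) ((v :: q) ++ [v]) := by
  unfold List.Chain'
  rw [List.isChain_iff_getElem]
  intro i hi
  have hi' : i < q.length + 1 := by simpa using hi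
  have hin : i < (v :: q).length := by simp only [List.length_cons]; omega
  rw [List.getElem_append_left hin]
  refine ⟨List.getElem_mem _, ?_⟩
  rw [List.formPerm_apply_getElem _ h i hin]
  rcases Nat.lt_or_ge (i + 1) (v :: q).length with hlt | hge
  · rw [List.getElem_append_left hlt]
    have hmod : (i + 1) % (q.length + 1) = i + 1 := Nat.mod_eq_of_lt (by simpa using hlt)
    simp [hmod]
  · have heq : i + 1 = (v :: q).length := by simp only [List.length_cons] at hge ⊢; omega
    rw [List.getElem_append_right hge]
    simp [heq]

lemma exchange {r m : ℕ} (T : Matrix (Fin r) (Fin m) ℝ) (I : Finset (Fin r)) (J : Finset (Fin m))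
    (g : Fin r → Fin m) (inv : Fin m → Fin r)
    (hmapsto : ∀ i ∈ I, g i ∈ J)
    (hinv₁ : ∀ a ∈ J, inv a ∈ I) (hinv₂ : ∀ a ∈ J, g (inv a) = a)
    (hinj : ∀ i ∈ I, inv (g i) = i)
    (hmax : ∀ τ' : Fin r → Fin m, Set.BijOn τ' ↑I ↑J →
      ∑ i ∈ I, T i (g i) ≥ ∑ i ∈ I, T i (τ' i))
    (v : Fin m) (q : List (Fin m)) (hnd : (v :: q).Nodup) (hsub : ∀ a ∈ v :: q, a ∈ J) :
    0 ≤ walkW (fun a b => T (inv a) a - T (inv a) b) ((v :: q) ++ [v]) := by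
  classical
  set c : List (Fin m) := v :: q with hc
  set π := c.formPerm with hπ
  have hπmem : ∀ a ∈ c, π a ∈ c := fun a ha => List.formPerm_apply_mem_of_mem ha
  have hπid : ∀ a, a ∉ c → π a = a := fun a ha => List.formPerm_apply_of_notMem ha
  have hπJ : ∀ a ∈ J, π a ∈ J := by
    intro a ha
    by_cases hac : a ∈ c
    · exact hsub _ (hπmem a hac)
    · rw [hπid a hac]; exact ha
  have hbij : Set.BijOn (fun i => π (g i)) ↑I ↑J := by
    refine ⟨fun i hi => ?_, fun i hi j hj hij => ?_, fun b hb => ?_⟩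
    · exact Finset.mem_coe.mpr (hπJ _ (hmapsto i (Finset.mem_coe.mp hi)))
    · have hgij := π.injective hij
      have h1 := hinj i (Finset.mem_coe.mp hi)
      have h2 := hinj j (Finset.mem_coe.mp hj)
      rw [← h1, ← h2, hgij]
    · have hb' : b ∈ J := Finset.mem_coe.mp hb
      have hπab : π (π.symm b) = b := π.apply_symm_apply b
      have hab : π.symm b ∈ J := by
        by_cases hac : π.symm b ∈ c
        · exact hsub _ hac
        · rw [hπid _ hac] at hπab
          rw [hπab]; exact hb'
      refine ⟨inv (π.symm b), Finset.mem_coe.mpr (hinv₁ _ hab), ?_⟩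
      simp only [hinv₂ _ hab, hπab]
  have hsum := hmax _ hbij
  have h0 : 0 ≤ ∑ i ∈ I, (T i (g i) - T i (π (g i))) := by
    rw [Finset.sum_sub_distrib]
    simpa using hsum
  set F : Fin m → ℝ := fun a => T (inv a) a - T (inv a) (π a) with hF
  have e1 : ∑ i ∈ I, (T i (g i) - T i (π (g i))) = ∑ a ∈ J, F a := by
    refine Finset.sum_nbij' g inv (fun i hi => hmapsto i hi) (fun a ha => hinv₁ a ha)
      (fun i hi => hinj i hi) (fun a ha => hinv₂ a ha) (fun i hi => ?_)
    rw [hF]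
    simp only [hinj i hi]
  have e2 : ∑ a ∈ J, F a = ∑ a ∈ c.toFinset, F a := by
    refine (Finset.sum_subset (fun a ha => hsub a (List.mem_toFinset.mp ha)) ?_).symm
    intro a haJ hac
    rw [hF]
    simp only [hπid a (fun hmem => hac (List.mem_toFinset.mpr hmem))]
    ring
  have e3 : ∑ a ∈ c.toFinset, F a = (c.map F).sum := List.sum_toFinset F hnd
  have e4 : (c.map F).sum = walkW (fun a b => T (inv a) a - T (inv a) b) (c ++ [v]) := by
    have hch : List.Chain' (fun a b => π a = b) (c ++ [v]) :=
      (chain_formPerm v q hnd).imp (fun _ _ hab => hab.2)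
    exact (walkW_concat_eq_sum (d := fun a b => T (inv a) a - T (inv a) b) c v hch).symm
  rw [e1, e2, e3, e4] at h0
  exact h0

lemma sum_comp_bijOn {r m : ℕ} {x : Fin m → ℝ} {I : Finset (Fin r)} {J : Finset (Fin m)}
    {f : Fin r → Fin m} (hbij : Set.BijOn f ↑I ↑J) : ∑ i ∈ I, x (f i) = ∑ a ∈ J, x a := by
  have himg : I.image f = J := by
    apply Finset.coe_injective
    rw [Finset.coe_image]
    exact hbij.image_eq
  rw [← himg]
  exact (Finset.sum_image (fun i hi j hj hij =>
    hbij.injOn (Finset.mem_coe.mpr hi) (Finset.mem_coe.mpr hj) hij)).symm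

lemma isIC_iff {r m : ℕ} (T : Matrix (Fin r) (Fin m) ℝ) (h : Fin r → Fin m) :
    IsIC T h ↔ ∀ I : Finset (Fin r), Set.InjOn h ↑I →
      ∀ τ' : Fin r → Fin m, Set.BijOn τ' ↑I ↑(I.image h) →
        ∑ i ∈ I, T i (h i) ≥ ∑ i ∈ I, T i (τ' i) := by
  constructor
  · rintro ⟨x, hx⟩ I hinj τ' hbij
    have hbij_h : Set.BijOn h ↑I ↑(I.image h) := by
      rw [Finset.coe_image]
      exact ⟨Set.mapsTo_image h ↑I, hinj, Set.surjOn_image h ↑I⟩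
    have e1 := sum_comp_bijOn (x := x) hbij_h
    have e2 := sum_comp_bijOn (x := x) hbij
    have key : ∀ i ∈ I, T i (τ' i) - x (τ' i) ≤ T i (h i) - x (h i) := fun i _ => hx i (τ' i)
    have hsum := Finset.sum_le_sum key
    rw [Finset.sum_sub_distrib, Finset.sum_sub_distrib, e1, e2] at hsum
    linarith
  · intro H
    rcases Nat.eq_zero_or_pos m with hm | hm
    · subst hm
      exact ⟨fun k => k.elim0, fun _ k => k.elim0⟩
    rcases Nat.eq_zero_or_pos r with hr | hr
    · subst hr
      exact ⟨0, fun i => i.elim0⟩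
    haveI : Nonempty (Fin m) := ⟨⟨0, hm⟩⟩
    haveI : Nonempty (Fin r) := ⟨⟨0, hr⟩⟩
    classical
    set fib : Fin m → Finset (Fin r) := fun a => Finset.univ.filter (fun i => h i = a) with hfib
    have hfib_self : ∀ i : Fin r, i ∈ fib (h i) :=
      fun i => Finset.mem_filter.mpr ⟨Finset.mem_univ _, rfl⟩
    have hfib_mem : ∀ a, ∀ i ∈ fib a, h i = a := fun a i hi => (Finset.mem_filter.mp hi).2
    set B : ℝ := ∑ i : Fin r, ∑ a : Fin m, ∑ b : Fin m, |T i a - T i b| with hB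
    have hBabs : ∀ (i : Fin r) (a b : Fin m), |T i a - T i b| ≤ B := by
      intro i a b
      rw [hB]
      calc |T i a - T i b| ≤ ∑ b' : Fin m, |T i a - T i b'| :=
            Finset.single_le_sum (f := fun b' => |T i a - T i b'|)
              (fun _ _ => abs_nonneg _) (Finset.mem_univ b)
        _ ≤ ∑ a' : Fin m, ∑ b' : Fin m, |T i a' - T i b'| :=
            Finset.single_le_sum (f := fun a' => ∑ b' : Fin m, |T i a' - T i b'|)
              (fun _ _ => Finset.sum_nonneg (fun _ _ => abs_nonneg _)) (Finset.mem_univ a)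
        _ ≤ _ := Finset.single_le_sum
              (f := fun i' => ∑ a' : Fin m, ∑ b' : Fin m, |T i' a' - T i' b'|)
              (fun _ _ => Finset.sum_nonneg fun _ _ =>
                Finset.sum_nonneg (fun _ _ => abs_nonneg _)) (Finset.mem_univ i)
    have hB0 : 0 ≤ B :=
      le_trans (abs_nonneg _)
        (hBabs (Classical.arbitrary _) (Classical.arbitrary _) (Classical.arbitrary _))
    set M : ℝ := (m + 2) * B + 1 with hM
    set d : Fin m → Fin m → ℝ := fun a b =>
      if ha : (fib a).Nonempty then (fib a).inf' ha (fun i => T i a - T i b) else M with hd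
    have hd_le : ∀ (i : Fin r) (b : Fin m), d (h i) b ≤ T i (h i) - T i b := by
      intro i b
      have : d (h i) b = (fib (h i)).inf' ⟨i, hfib_self i⟩ (fun i' => T i' (h i) - T i' b) := by
        rw [hd]
        exact dif_pos ⟨i, hfib_self i⟩
      rw [this]
      exact Finset.inf'_le _ (hfib_self i)
    have hd_lb : ∀ a b, -B ≤ d a b := by
      intro a b
      rw [hd]
      simp only []
      split_ifs with ha
      · obtain ⟨i, hi, he⟩ := Finset.exists_mem_eq_inf' ha (fun i => T i a - T i b)
        rw [he]
        have h1 := hBabs i a b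
        have h2 := neg_abs_le (T i a - T i b)
        linarith
      · rw [hM]; nlinarith
    have Hcyc : ∀ (v : Fin m) (q : List (Fin m)), (v :: q).Nodup →
        0 ≤ walkW d ((v :: q) ++ [v]) := by
      intro v q hnd
      by_cases hall : ∀ a ∈ v :: q, (fib a).Nonempty
      · set π := (v :: q).formPerm with hπ
        have hsel : ∀ a : Fin m, ∃ i : Fin r, (fib a).Nonempty →
            i ∈ fib a ∧ ∀ i' ∈ fib a, T i a - T i (π a) ≤ T i' a - T i' (π a) := by
          intro a
          by_cases ha : (fib a).Nonempty
          · obtain ⟨i, hi, hmin⟩ := Finset.exists_min_image (fib a)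
              (fun i => T i a - T i (π a)) ha
            exact ⟨i, fun _ => ⟨hi, hmin⟩⟩
          · exact ⟨Classical.arbitrary _, fun hcon => absurd hcon ha⟩
        choose inv hinv using hsel
        have hinvfib : ∀ a ∈ v :: q, inv a ∈ fib a := fun a ha => (hinv a (hall a ha)).1
        have hhinv : ∀ a ∈ v :: q, h (inv a) = a := fun a ha => hfib_mem a _ (hinvfib a ha)
        set I₀ : Finset (Fin r) := ((v :: q).toFinset).image inv with hI₀
        have hmemI₀ : ∀ i ∈ I₀, ∃ a ∈ v :: q, inv a = i := by
          intro i hi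
          obtain ⟨a, ha, he⟩ := Finset.mem_image.mp hi
          exact ⟨a, List.mem_toFinset.mp ha, he⟩
        have hhI₀ : ∀ i ∈ I₀, h i ∈ v :: q := by
          intro i hi
          obtain ⟨a, ha, rfl⟩ := hmemI₀ i hi
          rw [hhinv a ha]; exact ha
        have hinvh : ∀ i ∈ I₀, inv (h i) = i := by
          intro i hi
          obtain ⟨a, ha, rfl⟩ := hmemI₀ i hi
          rw [hhinv a ha]
        have hinjOn : Set.InjOn h ↑I₀ := by
          intro i hi j hj hij
          rw [← hinvh i (Finset.mem_coe.mp hi), ← hinvh j (Finset.mem_coe.mp hj), hij]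
        have himg : I₀.image h = (v :: q).toFinset := by
          rw [hI₀, Finset.image_image]
          apply Finset.ext
          intro b
          simp only [Finset.mem_image, List.mem_toFinset, Function.comp]
          constructor
          · rintro ⟨a, ha, rfl⟩
            rw [hhinv a ha]; exact ha
          · intro hb
            exact ⟨b, hb, hhinv b hb⟩
        have hmax₀ := H I₀ hinjOn
        rw [himg] at hmax₀
        have hEx := exchange T I₀ ((v :: q).toFinset) h inv
          (fun i hi => List.mem_toFinset.mpr (hhI₀ i hi))
          (fun a ha => Finset.mem_image.mpr ⟨a, ha, rfl⟩)
          (fun a ha => hhinv a (List.mem_toFinset.mp ha))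
          hinvh hmax₀ v q hnd (fun a ha => List.mem_toFinset.mpr ha)
        have hch : List.Chain' (fun a b => (T (inv a) a - T (inv a) b) = d a b)
            ((v :: q) ++ [v]) := by
          refine (chain_formPerm v q hnd).imp (fun a b hab => ?_)
          obtain ⟨hamem, hπab⟩ := hab
          have ha := hall a hamem
          have : d a b = (fib a).inf' ha (fun i => T i a - T i b) := by
            rw [hd]; exact dif_pos ha
          rw [this]
          refine le_antisymm (Finset.le_inf' _ _ (fun i' hi' => ?_)) (Finset.inf'_le _ (hinvfib a hamem))
          have hthis := (hinv a ha).2 i' hi'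
          rw [hπ] at hthis
          rw [← hπab]
          exact hthis
        rw [walkW_congr hch] at hEx
        exact hEx
      · push_neg at hall
        obtain ⟨u, hu, hufib⟩ := hall
        have hdu : ∀ b, M ≤ d u b := by
          intro b
          rw [hd]
          simp only []
          rw [dif_neg (Finset.not_nonempty_iff_eq_empty.mpr hufib)]
        have hfake := walkW_fake hB0 hd_lb hdu ((v :: q) ++ [v])
          (by rw [List.dropLast_concat]; exact hu)
        have hlen : (((v :: q) ++ [v]).length : ℝ) ≤ (m : ℝ) + 1 := by
          have := hnd.length_le_card
          simp only [Fintype.card_fin] at this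
          simp only [List.length_append, List.length_cons, List.length_singleton, List.length_nil]
          push_cast
          simp only [List.length_cons] at this
          have hcast : (q.length : ℝ) + 1 ≤ (m : ℝ) := by exact_mod_cast this
          linarith
        have : 0 ≤ M - (((v :: q) ++ [v]).length : ℝ) * B := by
          rw [hM]
          nlinarith
        linarith
    obtain ⟨x, hx⟩ := potential d Hcyc
    refine ⟨x, fun i k => ?_⟩
    have h1 := hx k (h i)
    have h2 := hd_le i k
    linarith

lemma exists_extension {r m : ℕ} (T : Matrix (Fin r) (Fin m) ℝ) (hm : 0 < m)
    (I : Finset (Fin r)) (J : Finset (Fin m)) (τ : Fin r → Fin m)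
    (hbij : Set.BijOn τ ↑I ↑J)
    (hmax : ∀ τ' : Fin r → Fin m, Set.BijOn τ' ↑I ↑J →
      ∑ i ∈ I, T i (τ i) ≥ ∑ i ∈ I, T i (τ' i)) :
    ∃ h : Fin r → Fin m, (∀ i ∈ I, h i = τ i) ∧ IsIC T h := by
  classical
  haveI : Nonempty (Fin m) := ⟨⟨0, hm⟩⟩
  rcases Nat.eq_zero_or_pos r with hr | hr
  · exact ⟨fun _ => ⟨0, hm⟩, fun i _ => absurd i.isLt (by omega),
      ⟨0, fun i _ => absurd i.isLt (by omega)⟩⟩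
  haveI : Nonempty (Fin r) := ⟨⟨0, hr⟩⟩
  set inv : Fin m → Fin r := fun a => Function.invFunOn τ ↑I a with hinvdef
  have hJτ : ∀ a ∈ J, ∃ i ∈ (↑I : Set (Fin r)), τ i = a := fun a ha =>
    hbij.surjOn (Finset.mem_coe.mpr ha)
  have hinvI : ∀ a ∈ J, inv a ∈ I := fun a ha => Function.invFunOn_mem (hJτ a ha)
  have hτinv : ∀ a ∈ J, τ (inv a) = a := fun a ha => Function.invFunOn_eq (hJτ a ha)
  have hinvτ : ∀ i ∈ I, inv (τ i) = i := fun i hi =>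
    hbij.injOn.leftInvOn_invFunOn (Finset.mem_coe.mpr hi)
  set B : ℝ := ∑ i : Fin r, ∑ a : Fin m, ∑ b : Fin m, |T i a - T i b| with hB
  have hBabs : ∀ (i : Fin r) (a b : Fin m), |T i a - T i b| ≤ B := by
    intro i a b
    rw [hB]
    calc |T i a - T i b| ≤ ∑ b' : Fin m, |T i a - T i b'| :=
          Finset.single_le_sum (f := fun b' => |T i a - T i b'|)
            (fun _ _ => abs_nonneg _) (Finset.mem_univ b)
      _ ≤ ∑ a' : Fin m, ∑ b' : Fin m, |T i a' - T i b'| :=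
          Finset.single_le_sum (f := fun a' => ∑ b' : Fin m, |T i a' - T i b'|)
            (fun _ _ => Finset.sum_nonneg (fun _ _ => abs_nonneg _)) (Finset.mem_univ a)
      _ ≤ _ := Finset.single_le_sum
            (f := fun i' => ∑ a' : Fin m, ∑ b' : Fin m, |T i' a' - T i' b'|)
            (fun _ _ => Finset.sum_nonneg fun _ _ =>
              Finset.sum_nonneg (fun _ _ => abs_nonneg _)) (Finset.mem_univ i)
  have hB0 : 0 ≤ B :=
    le_trans (abs_nonneg _)
      (hBabs (Classical.arbitrary _) (Classical.arbitrary _) (Classical.arbitrary _))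
  set M : ℝ := (m + 2) * B + 1 with hM
  set d : Fin m → Fin m → ℝ := fun a b =>
    if a ∈ J then T (inv a) a - T (inv a) b else M with hd
  have hd_lb : ∀ a b, -B ≤ d a b := by
    intro a b
    rw [hd]
    simp only []
    split_ifs with ha
    · have h1 := hBabs (inv a) a b
      have h2 := neg_abs_le (T (inv a) a - T (inv a) b)
      linarith
    · rw [hM]; nlinarith
  have Hcyc : ∀ (v : Fin m) (q : List (Fin m)), (v :: q).Nodup →
      0 ≤ walkW d ((v :: q) ++ [v]) := by
    intro v q hnd
    by_cases hall : ∀ a ∈ v :: q, a ∈ J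
    · have hEx := exchange T I J τ inv
        (fun i hi => Finset.mem_coe.mp (hbij.mapsTo (Finset.mem_coe.mpr hi)))
        hinvI hτinv hinvτ hmax v q hnd hall
      have hch : List.Chain' (fun a b => (T (inv a) a - T (inv a) b) = d a b)
          ((v :: q) ++ [v]) := by
        refine (chain_formPerm v q hnd).imp (fun a b hab => ?_)
        rw [hd]
        simp only []
        rw [if_pos (hall a hab.1)]
      rw [walkW_congr hch] at hEx
      exact hEx
    · push_neg at hall
      obtain ⟨u, hu, huJ⟩ := hall
      have hdu : ∀ b, M ≤ d u b := by
        intro b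
        rw [hd]
        simp only []
        rw [if_neg huJ]
      have hfake := walkW_fake hB0 hd_lb hdu ((v :: q) ++ [v])
        (by rw [List.dropLast_concat]; exact hu)
      have hlen : (((v :: q) ++ [v]).length : ℝ) ≤ (m : ℝ) + 1 := by
        have hle := hnd.length_le_card
        simp only [Fintype.card_fin, List.length_cons] at hle
        simp only [List.length_append, List.length_cons, List.length_nil]
        have hcast : (q.length : ℝ) + 1 ≤ (m : ℝ) := by exact_mod_cast hle
        push_cast
        linarith
      have hpos : 0 ≤ M - (((v :: q) ++ [v]).length : ℝ) * B := by
        rw [hM]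
        nlinarith
      linarith
  obtain ⟨x, hx⟩ := potential d Hcyc
  have hsel : ∀ i : Fin r, ∃ k : Fin m, ∀ k', T i k' - x k' ≤ T i k - x k := by
    intro i
    obtain ⟨k, _, hk⟩ := Finset.exists_max_image Finset.univ (fun k => T i k - x k)
      ⟨Classical.arbitrary _, Finset.mem_univ _⟩
    exact ⟨k, fun k' => hk k' (Finset.mem_univ _)⟩
  choose sel hsel' using hsel
  refine ⟨fun i => if i ∈ I then τ i else sel i, fun i hi => if_pos hi, x, fun i k => ?_⟩
  by_cases hi : i ∈ I
  · simp only [if_pos hi]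
    have hτJ : τ i ∈ J := Finset.mem_coe.mp (hbij.mapsTo (Finset.mem_coe.mpr hi))
    have hx1 := hx k (τ i)
    have hdv : d (τ i) k = T i (τ i) - T i k := by
      rw [hd]
      simp only []
      rw [if_pos hτJ, hinvτ i hi]
    rw [hdv] at hx1
    linarith
  · simp only [if_neg hi]
    exact hsel' i k

lemma transfer {r m : ℕ} (T T' : Matrix (Fin r) (Fin m) ℝ) (hm : 0 < m)
    (hIC : ∀ h, IsIC T h → IsIC T' h)
    (I : Finset (Fin r)) (J : Finset (Fin m)) (τ : Fin r → Fin m)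
    (hbij : Set.BijOn τ ↑I ↑J)
    (hmax : ∀ τ' : Fin r → Fin m, Set.BijOn τ' ↑I ↑J →
      ∑ i ∈ I, T i (τ i) ≥ ∑ i ∈ I, T i (τ' i)) :
    ∀ τ' : Fin r → Fin m, Set.BijOn τ' ↑I ↑J →
      ∑ i ∈ I, T' i (τ i) ≥ ∑ i ∈ I, T' i (τ' i) := by
  obtain ⟨h, hext, hICh⟩ := exists_extension T hm I J τ hbij hmax
  have hICh' := hIC h hICh
  rw [isIC_iff] at hICh'
  have hinj : Set.InjOn h ↑I := by
    intro i hi j hj hij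
    rw [hext i (Finset.mem_coe.mp hi), hext j (Finset.mem_coe.mp hj)] at hij
    exact hbij.injOn hi hj hij
  have himg : I.image h = J := by
    rw [Finset.image_congr (fun i hi => hext i hi)]
    exact Finset.coe_injective (by rw [Finset.coe_image]; exact hbij.image_eq)
  have hKey := hICh' I hinj
  rw [himg] at hKey
  intro τ' hbij'
  have hge := hKey τ' hbij'
  calc ∑ i ∈ I, T' i (τ i) = ∑ i ∈ I, T' i (h i) :=
        Finset.sum_congr rfl (fun i hi => by rw [hext i hi])
    _ ≥ ∑ i ∈ I, T' i (τ' i) := hge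

end ICAux

theorem stmt_2 {r m : ℕ} (T₁ T₂ : Matrix (Fin r) (Fin m) ℝ) :
    ({h | IsIC T₁ h} = {h | IsIC T₂ h}) ↔
    (∀ (I : Finset (Fin r)) (J : Finset (Fin m)), I.card = J.card →
      ∀ τ : Fin r → Fin m, Set.BijOn τ ↑I ↑J →
        ((∀ τ' : Fin r → Fin m, Set.BijOn τ' ↑I ↑J →
            ∑ i ∈ I, T₁ i (τ i) ≥ ∑ i ∈ I, T₁ i (τ' i)) ↔
         (∀ τ' : Fin r → Fin m, Set.BijOn τ' ↑I ↑J →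
            ∑ i ∈ I, T₂ i (τ i) ≥ ∑ i ∈ I, T₂ i (τ' i)))) := by
  constructor
  · intro hIC I J hcard τ hbij
    rcases Nat.eq_zero_or_pos m with hm | hm
    · subst hm
      have hI : I = ∅ := Finset.card_eq_zero.mp (by rw [hcard, Finset.eq_empty_of_isEmpty J]; simp)
      subst hI
      constructor <;> intro _ τ' _ <;> simp
    · have h12 : ∀ g, IsIC T₁ g → IsIC T₂ g := fun g hg => (Set.ext_iff.mp hIC g).mp hg
      have h21 : ∀ g, IsIC T₂ g → IsIC T₁ g := fun g hg => (Set.ext_iff.mp hIC g).mpr hg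
      exact ⟨fun hmax => ICAux.transfer T₁ T₂ hm h12 I J τ hbij hmax,
             fun hmax => ICAux.transfer T₂ T₁ hm h21 I J τ hbij hmax⟩
  · intro H
    have key : ∀ (T T' : Matrix (Fin r) (Fin m) ℝ),
        (∀ (I : Finset (Fin r)) (J : Finset (Fin m)), I.card = J.card →
          ∀ τ : Fin r → Fin m, Set.BijOn τ ↑I ↑J →
          ((∀ τ' : Fin r → Fin m, Set.BijOn τ' ↑I ↑J →
              ∑ i ∈ I, T i (τ i) ≥ ∑ i ∈ I, T i (τ' i)) →
           (∀ τ' : Fin r → Fin m, Set.BijOn τ' ↑I ↑J →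
              ∑ i ∈ I, T' i (τ i) ≥ ∑ i ∈ I, T' i (τ' i)))) →
        ∀ h, IsIC T h → IsIC T' h := by
      intro T T' hTT' h hh
      rw [ICAux.isIC_iff] at hh ⊢
      intro I hinj
      have hbij : Set.BijOn h ↑I ↑(I.image h) := by
        rw [Finset.coe_image]
        exact ⟨Set.mapsTo_image h ↑I, hinj, Set.surjOn_image h ↑I⟩
      have hcard : I.card = (I.image h).card := (Finset.card_image_of_injOn hinj).symm
      exact hTT' I (I.image h) hcard h hbij (hh I hinj)
    ext h
    simp only [Set.mem_setOf_eq]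
    constructor
    · exact key T₁ T₂ (fun I J hc τ hb => (H I J hc τ hb).mp) h
    · exact key T₂ T₁ (fun I J hc τ hb => (H I J hc τ hb).mpr) h
end

section
/- Let T¹ ∈ ℝ^(r₁×m), T² ∈ ℝ^(r₂×m), and g : Fin r₁ × Fin r₂ → Fin m. Then g is a two-player IC outcome function on T¹ × T² if and only if every column function g(·, j) : Fin r₁ → Fin m is IC on T¹ and every row function g(i, ·) : Fin r₂ → Fin m is IC on T². -/
theorem stmt_3 {r₁ r₂ m : ℕ} (T₁ : Matrix (Fin r₁) (Fin m) ℝ)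
    (T₂ : Matrix (Fin r₂) (Fin m) ℝ) (g : Fin r₁ × Fin r₂ → Fin m) :
    (∃ (p₁ p₂ : Fin r₁ × Fin r₂ → ℝ),
      (∀ j i i', T₁ i (g (i, j)) - p₁ (i, j) ≥ T₁ i (g (i', j)) - p₁ (i', j)) ∧
      (∀ i j j', T₂ j (g (i, j)) - p₂ (i, j) ≥ T₂ j (g (i, j')) - p₂ (i, j'))) ↔
    ((∀ j, IsIC T₁ (fun i => g (i, j))) ∧ (∀ i, IsIC T₂ (fun j => g (i, j)))) := by
  classical
  constructor
  · rintro ⟨p₁, p₂, h₁, h₂⟩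
    constructor
    · intro j
      refine ⟨fun k => if hk : ∃ i', g (i', j) = k then p₁ (hk.choose, j)
        else ∑ i, |T₁ i k - T₁ i (g (i, j)) + p₁ (i, j)|, ?_⟩
      intro i k
      have hmem : ∃ i', g (i', j) = g (i, j) := ⟨i, rfl⟩
      have hgi : g (hmem.choose, j) = g (i, j) := hmem.choose_spec
      have hpeq : p₁ (hmem.choose, j) = p₁ (i, j) := by
        have h1 := h₁ j i hmem.choose
        have h2 := h₁ j hmem.choose i
        rw [hgi] at h1 h2
        linarith
      by_cases hk : ∃ i', g (i', j) = k
      · have hgk : g (hk.choose, j) = k := hk.choose_spec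
        have h3 := h₁ j i hk.choose
        rw [hgk] at h3
        simp only [hmem, hk, dif_pos, hpeq]
        linarith
      · simp only [hmem, hk, dif_pos, dif_neg, not_false_iff, hpeq]
        have hle : T₁ i k - T₁ i (g (i, j)) + p₁ (i, j)
            ≤ ∑ i', |T₁ i' k - T₁ i' (g (i', j)) + p₁ (i', j)| :=
          le_trans (le_abs_self _)
            (Finset.single_le_sum (f := fun i' => |T₁ i' k - T₁ i' (g (i', j)) + p₁ (i', j)|) (fun _ _ => abs_nonneg _) (Finset.mem_univ i))
        linarith
    · intro i
      refine ⟨fun k => if hk : ∃ j', g (i, j') = k then p₂ (i, hk.choose)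
        else ∑ j, |T₂ j k - T₂ j (g (i, j)) + p₂ (i, j)|, ?_⟩
      intro j k
      have hmem : ∃ j', g (i, j') = g (i, j) := ⟨j, rfl⟩
      have hgj : g (i, hmem.choose) = g (i, j) := hmem.choose_spec
      have hpeq : p₂ (i, hmem.choose) = p₂ (i, j) := by
        have h1 := h₂ i j hmem.choose
        have h2 := h₂ i hmem.choose j
        rw [hgj] at h1 h2
        linarith
      by_cases hk : ∃ j', g (i, j') = k
      · have hgk : g (i, hk.choose) = k := hk.choose_spec
        have h3 := h₂ i j hk.choose
        rw [hgk] at h3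
        simp only [hmem, hk, dif_pos, hpeq]
        linarith
      · simp only [hmem, hk, dif_pos, dif_neg, not_false_iff, hpeq]
        have hle : T₂ j k - T₂ j (g (i, j)) + p₂ (i, j)
            ≤ ∑ j', |T₂ j' k - T₂ j' (g (i, j')) + p₂ (i, j')| :=
          le_trans (le_abs_self _)
            (Finset.single_le_sum (f := fun j' => |T₂ j' k - T₂ j' (g (i, j')) + p₂ (i, j')|) (fun _ _ => abs_nonneg _) (Finset.mem_univ j))
        linarith
  · rintro ⟨hc, hr⟩
    choose x hx using hc
    choose y hy using hr
    exact ⟨fun p => x p.2 (g p), fun p => y p.1 (g p),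
      fun j i i' => hx j i (g (i', j)), fun i j j' => hy i j (g (i, j'))⟩
end

section
/- Let T¹ = [[0,2,3],[0,4,2],[0,3,7]] and T² = [[0,5,-5],[0,-2,9],[0,1,3]] (3×3 real matrices), and let g : Fin 3 × Fin 3 → Fin 3 be given by the matrix [[2,1,1],[2,1,2],[3,3,3]] (1-indexed outcomes). Then for all real α₁, α₂ > 0 and all γ ∈ ℝ³, there is no z ∈ ℝ³ satisfying α₁T¹_{i,g(i,j)} + α₂T²_{j,g(i,j)} + γ_{g(i,j)} - z_{g(i,j)} ≥ α₁T¹_{i,k} + α₂T²_{j,k} + γ_k - z_k for all i,j ∈ Fin 3, k ∈ Fin 3. In other words, g is not an affine maximizer on T¹ × T². -/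
noncomputable def T6₁ : Matrix (Fin 3) (Fin 3) ℝ := !![0,2,3; 0,4,2; 0,3,7]
noncomputable def T6₂ : Matrix (Fin 3) (Fin 3) ℝ := !![0,5,-5; 0,-2,9; 0,1,3]

def g6 : Fin 3 → Fin 3 → Fin 3 := ![![1,0,0], ![1,0,1], ![2,2,2]]

theorem stmt_6 :
    ∀ (α₁ α₂ : ℝ), 0 < α₁ → 0 < α₂ → ∀ (γ z : Fin 3 → ℝ),
      ¬ (∀ (i j k : Fin 3),
          α₁ * T6₁ i (g6 i j) + α₂ * T6₂ j (g6 i j) + γ (g6 i j) - z (g6 i j) ≥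
          α₁ * T6₁ i k + α₂ * T6₂ j k + γ k - z k) := by
  intro α₁ α₂ h1 h2 γ z h
  have A := h 0 0 0
  have B := h 0 1 2
  have C := h 1 1 1
  have D := h 2 0 1
  simp [T6₁, T6₂, g6, Matrix.cons_val_zero, Matrix.cons_val_one] at A B C D
  linarith
end

section
/- Define g : Fin 2 × Fin 2 × Fin 2 → Fin 6 by g(1,1,1)=1, g(1,1,2)=3, g(1,2,1)=4, g(1,2,2)=1, g(2,1,1)=5, g(2,1,2)=2, g(2,2,1)=2, g(2,2,2)=6. Suppose S¹, S², S³ ∈ ℝ^(2×6) and z ∈ ℝ⁶ satisfy S¹_{i₁,g(i)} + S²_{i₂,g(i)} + S³_{i₃,g(i)} - z_{g(i)} ≥ S¹_{i₁,k} + S²_{i₂,k} + S³_{i₃,k} - z_k for all i = (i₁,i₂,i₃) ∈ (Fin 2)³ and all k ∈ Fin 6 with k ≠ g(i). Then S¹_{1,1} + S¹_{2,2} ≥ S¹_{1,2} + S¹_{2,1}. -/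
def g7 : Fin 2 → Fin 2 → Fin 2 → Fin 6 :=
  ![![![0,2], ![3,0]], ![![4,1], ![1,5]]]

theorem stmt_7 (S₁ S₂ S₃ : Matrix (Fin 2) (Fin 6) ℝ) (z : Fin 6 → ℝ)
    (h : ∀ (i₁ i₂ i₃ : Fin 2) (k : Fin 6), k ≠ g7 i₁ i₂ i₃ →
      S₁ i₁ (g7 i₁ i₂ i₃) + S₂ i₂ (g7 i₁ i₂ i₃) + S₃ i₃ (g7 i₁ i₂ i₃) - z (g7 i₁ i₂ i₃) ≥
      S₁ i₁ k + S₂ i₂ k + S₃ i₃ k - z k) :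
    S₁ 0 0 + S₁ 1 1 ≥ S₁ 0 1 + S₁ 1 0 := by
  have h1 := h 0 0 0 1 (by decide)
  have h2 := h 0 1 1 1 (by decide)
  have h3 := h 1 0 1 0 (by decide)
  have h4 := h 1 1 0 0 (by decide)
  simp only [g7] at h1 h2 h3 h4
  norm_num at h1 h2 h3 h4
  linarith
end

section
/- Suppose S¹, S² ∈ ℝ^(2×4) satisfy: (a) S¹_{1,2} + S¹_{2,4} > S¹_{1,4} + S¹_{2,2}; (b) S²_{1,3} + S²_{2,1} > S²_{1,1} + S²_{2,3}; and (c) there exists Z ∈ ℝ⁴ with S¹_{1,4}+S²_{1,4}-Z₄ ≥ S¹_{1,3}+S²_{1,3}-Z₃, S¹_{1,3}+S²_{2,3}-Z₃ ≥ S¹_{1,2}+S²_{2,2}-Z₂, S¹_{2,1}+S²_{1,1}-Z₁ ≥ S¹_{2,4}+S²_{1,4}-Z₄, and S¹_{2,2}+S²_{2,2}-Z₂ ≥ S¹_{2,1}+S²_{2,1}-Z₁. Then we reach a contradiction (i.e., no such S¹, S², Z exist). -/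
theorem stmt_9 (S₁ S₂ : Matrix (Fin 2) (Fin 4) ℝ)
    (ha : S₁ 0 1 + S₁ 1 3 > S₁ 0 3 + S₁ 1 1)
    (hb : S₂ 0 2 + S₂ 1 0 > S₂ 0 0 + S₂ 1 2)
    (hc : ∃ Z : Fin 4 → ℝ,
      S₁ 0 3 + S₂ 0 3 - Z 3 ≥ S₁ 0 2 + S₂ 0 2 - Z 2 ∧
      S₁ 0 2 + S₂ 1 2 - Z 2 ≥ S₁ 0 1 + S₂ 1 1 - Z 1 ∧
      S₁ 1 0 + S₂ 0 0 - Z 0 ≥ S₁ 1 3 + S₂ 0 3 - Z 3 ∧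
      S₁ 1 1 + S₂ 1 1 - Z 1 ≥ S₁ 1 0 + S₂ 1 0 - Z 0) :
    False := by
  obtain ⟨Z, h1, h2, h3, h4⟩ := hc
  linarith
end

section
/- Let T ∈ ℝ^(r×m), let g : Fin r → Fin m be IC on T, and let I ⊆ Fin r be a set of indices on which g is injective, with J = g(I). Then the identity matching attains the max-plus tropical determinant of the minor T_{I,J}: for every bijection τ : I → J, Σ_{i∈I} T_{i,g(i)} ≥ Σ_{i∈I} T_{i,τ(i)}. -/
theorem stmt_10 {r m : ℕ} (T : Matrix (Fin r) (Fin m) ℝ) (g : Fin r → Fin m)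
    (hg : IsIC T g) (I : Finset (Fin r)) (hinj : Set.InjOn g ↑I)
    (τ : Fin r → Fin m) (hτ : Set.BijOn τ ↑I (g '' ↑I)) :
    ∑ i ∈ I, T i (g i) ≥ ∑ i ∈ I, T i (τ i) := by
  obtain ⟨x, hx⟩ := hg
  have himg : I.image τ = I.image g := by
    apply Finset.coe_injective
    rw [Finset.coe_image, Finset.coe_image, hτ.image_eq]
  have hsum : ∑ i ∈ I, x (τ i) = ∑ i ∈ I, x (g i) := by
    rw [← Finset.sum_image (f := x) (fun a ha b hb h => hτ.injOn ha hb h),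
        ← Finset.sum_image (f := x) (fun a ha b hb h => hinj ha hb h), himg]
  have key : ∀ i ∈ I, T i (τ i) - x (τ i) ≤ T i (g i) - x (g i) := fun i _ => hx i (τ i)
  have := Finset.sum_le_sum key
  simp only [Finset.sum_sub_distrib, hsum] at this
  linarith
end

section
/- For any T ∈ ℝ^(2×m), a function h : Fin 2 → Fin m is IC on T if and only if T_{1,h(1)} + T_{2,h(2)} ≥ T_{1,h(2)} + T_{2,h(1)}. -/
theorem stmt_17 {m : ℕ} (T : Matrix (Fin 2) (Fin m) ℝ) (h : Fin 2 → Fin m) :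
    IsIC T h ↔ T 0 (h 0) + T 1 (h 1) ≥ T 0 (h 1) + T 1 (h 0) := by
  constructor
  · rintro ⟨x, hx⟩
    have h1 := hx 0 (h 1)
    have h2 := hx 1 (h 0)
    linarith
  · intro hyp
    set c : ℝ := T 0 (h 1) - T 0 (h 0) with hc
    set x : Fin m → ℝ := fun k => if k = h 0 then 0 else if k = h 1 then c else
      max (T 0 k - T 0 (h 0)) (T 1 k - (T 1 (h 1) - c)) with hxdef
    have hx0 : x (h 0) = 0 := by simp [hxdef]
    have hx1 : x (h 1) = if h 1 = h 0 then 0 else c := by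
      rw [hxdef]; dsimp only; split <;> simp
    have hxk : ∀ k, k ≠ h 0 → k ≠ h 1 →
        x k = max (T 0 k - T 0 (h 0)) (T 1 k - (T 1 (h 1) - c)) := by
      intro k e0 e1; rw [hxdef]; dsimp only; rw [if_neg e0, if_neg e1]
    have hx1le : x (h 1) ≤ c := by
      rw [hx1]
      rcases eq_or_ne (h 1) (h 0) with e | e
      · rw [if_pos e, hc, e]; simp
      · rw [if_neg e]
    have hA0 : (0:ℝ) ≤ T 0 (h 0) - T 0 (h 1) + x (h 1) := by
      rw [hx1]
      rcases eq_or_ne (h 1) (h 0) with e | e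
      · rw [if_pos e, e]; simp
      · rw [if_neg e, hc]; linarith
    have hB1 : x (h 1) ≤ T 1 (h 1) - T 1 (h 0) := by
      rw [hx1]
      rcases eq_or_ne (h 1) (h 0) with e | e
      · rw [if_pos e, e]; simp
      · rw [if_neg e, hc]; linarith
    refine ⟨x, ?_⟩
    intro i k
    have hi : i = 0 ∨ i = 1 := by omega
    rcases hi with hi | hi <;> subst hi
    · by_cases e0 : k = h 0
      · subst e0; linarith
      · by_cases e1 : k = h 1
        · subst e1; rw [hx0]; linarith
        · rw [hx0, hxk k e0 e1]
          have h1 := le_max_left (T 0 k - T 0 (h 0)) (T 1 k - (T 1 (h 1) - c))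
          linarith
    · by_cases e0 : k = h 0
      · subst e0; rw [hx0]; linarith
      · by_cases e1 : k = h 1
        · subst e1; linarith
        · rw [hxk k e0 e1]
          have h2 := le_max_right (T 0 k - T 0 (h 0)) (T 1 k - (T 1 (h 1) - c))
          linarith
end
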